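/- Let ρ ∈ (0,1), ε > 0, and let x : ℝ → ℝ be differentiable with x'(t) ≥ -ε · sgn(x(t)) · |x(t)|^ρ for all t ≥ t_w, where t_w ≥ 0. Then for any initial value x(t_w) ∈ ℝ, we have x(t) ≥ 0 for all t ≥ t_w + max(0, -x(t_w))^(1-ρ)/(ε(1-ρ)). -/

import Mathlib

/-- Forward invariance: once the solution is nonnegative, it stays nonnegative. -/
lemma stmt2_inv (ε ρ tw : ℝ) (hε : 0 < ε) (hρ0 : 0 < ρ)
    (x : ℝ → ℝ) (hx : Differentiable ℝ x)
    (hineq : ∀ t ≥ tw, deriv x t ≥ -ε * Real.sign (x t) * |x t| ^ ρ)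
    (t1 : ℝ) (ht1 : tw ≤ t1) (hx1 : 0 ≤ x t1) :
    ∀ t ≥ t1, 0 ≤ x t := by
  intro t0 ht0
  by_contra h
  push_neg at h
  set S : Set ℝ := {u | u ∈ Set.Icc t1 t0 ∧ 0 ≤ x u} with hS
  have hSne : S.Nonempty := ⟨t1, ⟨le_refl _, ht0⟩, hx1⟩
  have hSbdd : BddAbove S := ⟨t0, fun u hu => hu.1.2⟩
  have hclosed : IsClosed S := by
    have : S = Set.Icc t1 t0 ∩ {u | 0 ≤ x u} := rfl
    rw [this]
    exact isClosed_Icc.inter (isClosed_le continuous_const hx.continuous)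
  set s := sSup S with hs
  have hsmem : s ∈ S := hclosed.csSup_mem hSne hSbdd
  obtain ⟨⟨hs1, hs2⟩, hxs⟩ := hsmem
  have hst0 : s < t0 := lt_of_le_of_ne hs2 (by intro he; rw [he] at hxs; exact absurd hxs (not_le.mpr h))
  -- on (s, t0], x < 0
  have hneg : ∀ u, s < u → u ≤ t0 → x u < 0 := by
    intro u hu1 hu2
    by_contra hc
    push_neg at hc
    have : u ∈ S := ⟨⟨le_trans hs1 hu1.le, hu2⟩, hc⟩
    exact absurd (le_csSup hSbdd this) (not_le.mpr hu1)
  -- x is monotone on [s, t0]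
  have hmono : MonotoneOn x (Set.Icc s t0) := by
    apply monotoneOn_of_deriv_nonneg (convex_Icc s t0) hx.continuous.continuousOn
      (hx.differentiableOn)
    intro u hu
    rw [interior_Icc] at hu
    have hxu : x u < 0 := hneg u hu.1 hu.2.le
    have hutw : tw ≤ u := le_trans (le_trans ht1 hs1) hu.1.le
    have := hineq u hutw
    rw [Real.sign_of_neg hxu] at this
    have h1 : (0:ℝ) ≤ ε * |x u| ^ ρ :=
      mul_nonneg hε.le (Real.rpow_nonneg (abs_nonneg _) ρ)
    nlinarith
  have := hmono ⟨le_refl s, hst0.le⟩ ⟨hst0.le, le_refl t0⟩ hst0.le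
  linarith

theorem stmt2 (ε ρ tw : ℝ) (hε : 0 < ε) (hρ0 : 0 < ρ) (hρ1 : ρ < 1) (htw : 0 ≤ tw)
    (x : ℝ → ℝ) (hx : Differentiable ℝ x)
    (hineq : ∀ t ≥ tw, deriv x t ≥ -ε * Real.sign (x t) * |x t| ^ ρ) :
    ∀ t ≥ tw + (max 0 (-(x tw))) ^ (1 - ρ) / (ε * (1 - ρ)), x t ≥ 0 := by
  intro t ht
  rcases le_or_gt 0 (x tw) with h0 | h0
  · -- max = 0, T = tw
    have hmax : max 0 (-(x tw)) = 0 := max_eq_left (by linarith)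
    rw [hmax, Real.zero_rpow (by linarith : (1:ℝ) - ρ ≠ 0), zero_div, add_zero] at ht
    exact stmt2_inv ε ρ tw hε hρ0 x hx hineq tw (le_refl _) h0 t ht
  · have hmax : max 0 (-(x tw)) = -(x tw) := max_eq_right (by linarith)
    set T := tw + (max 0 (-(x tw))) ^ (1 - ρ) / (ε * (1 - ρ)) with hT
    have hεp : 0 < ε * (1 - ρ) := mul_pos hε (by linarith)
    have hgtw : (0:ℝ) < (-(x tw)) ^ (1 - ρ) := Real.rpow_pos_of_pos (by linarith) _
    have htwT : tw ≤ T := by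
      rw [hT, hmax]
      have : 0 ≤ (-(x tw)) ^ (1 - ρ) / (ε * (1 - ρ)) := div_nonneg hgtw.le hεp.le
      linarith
    -- find a time t1 in [tw, T] with x t1 ≥ 0
    have hex : ∃ t1 ∈ Set.Icc tw T, 0 ≤ x t1 := by
      by_contra hc
      push_neg at hc
      have hneg : ∀ u ∈ Set.Icc tw T, x u < 0 := fun u hu => hc u hu
      -- h u = (-x u)^(1-ρ) + ε(1-ρ)u is antitone on [tw,T]
      set g : ℝ → ℝ := fun u => (-x u) ^ (1 - ρ) + ε * (1 - ρ) * u with hg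
      have hderiv : ∀ u ∈ Set.Icc tw T, HasDerivAt g
          ((-(deriv x u)) * (1 - ρ) * (-x u) ^ (1 - ρ - 1) + ε * (1 - ρ)) u := by
        intro u hu
        have hxu : 0 < -x u := by linarith [hneg u hu]
        have h1 : HasDerivAt (fun u => -x u) (-(deriv x u)) u := (hx u).hasDerivAt.neg
        have h2 := h1.rpow_const (p := 1 - ρ) (Or.inl hxu.ne')
        have h3 : HasDerivAt (fun u => ε * (1 - ρ) * u) (ε * (1 - ρ)) u := by
          simpa using (hasDerivAt_id u).const_mul (ε * (1 - ρ))
        exact h2.add h3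
      have hanti : AntitoneOn g (Set.Icc tw T) := by
        apply antitoneOn_of_deriv_nonpos (convex_Icc tw T)
        · exact fun u hu => ((hderiv u hu).continuousAt).continuousWithinAt
        · intro u hu
          rw [interior_Icc] at hu
          exact ((hderiv u (Set.mem_Icc.mpr ⟨hu.1.le, hu.2.le⟩)).differentiableAt).differentiableWithinAt
        · intro u hu
          rw [interior_Icc] at hu
          have hu' : u ∈ Set.Icc tw T := ⟨hu.1.le, hu.2.le⟩
          rw [(hderiv u hu').deriv]
          have hxu : 0 < -x u := by linarith [hneg u hu']
          have hdx := hineq u hu'.1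
          rw [Real.sign_of_neg (by linarith : x u < 0), abs_of_neg (by linarith : x u < 0)] at hdx
          -- hdx : deriv x u ≥ -ε * (-1) * (-x u)^ρ = ε * (-x u)^ρ
          have hdx' : ε * (-x u) ^ ρ ≤ deriv x u := by nlinarith
          have hpow : (-x u) ^ (1 - ρ - 1) = ((-x u) ^ ρ)⁻¹ := by
            rw [show (1:ℝ) - ρ - 1 = -ρ by ring, Real.rpow_neg hxu.le]
          have hpowpos : 0 < (-x u) ^ ρ := Real.rpow_pos_of_pos hxu ρ
          rw [hpow]
          have key : (-(deriv x u)) * (1 - ρ) * ((-x u) ^ ρ)⁻¹ ≤ -(ε * (1 - ρ)) := by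
            rw [mul_inv_le_iff₀ hpowpos]
            have : ε * (-x u) ^ ρ * (1 - ρ) ≤ deriv x u * (1 - ρ) :=
              mul_le_mul_of_nonneg_right hdx' (by linarith)
            nlinarith
          linarith
      have hle := hanti ⟨le_refl tw, htwT⟩ ⟨htwT, le_refl T⟩ htwT
      -- g T ≤ g tw gives (-x T)^(1-ρ) ≤ (-x tw)^(1-ρ) - ε(1-ρ)(T - tw) = 0
      have hTtw : ε * (1 - ρ) * (T - tw) = (-(x tw)) ^ (1 - ρ) := by
        rw [hT, hmax]
        field_simp
        have h1ρ : (1:ℝ) - ρ ≠ 0 := by linarith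
        rw [add_sub_cancel_left, mul_div_cancel₀ _ h1ρ]
      have hgT : (0:ℝ) < (-x T) ^ (1 - ρ) :=
        Real.rpow_pos_of_pos (by linarith [hneg T ⟨htwT, le_refl T⟩]) _
      simp only [hg] at hle
      nlinarith
    obtain ⟨t1, ⟨ht1a, ht1b⟩, ht1c⟩ := hex
    exact stmt2_inv ε ρ tw hε hρ0 x hx hineq t1 ht1a ht1c t (le_trans ht1b ht)
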